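/- For every W ∈ Matrix (Fin n) (Fin n) ℝ, the tropical transfer matrix T(W) of the canonical totally connected planar network has all entries real and is tropical totally nonnegative, i.e., T(W) ∈ TNtrop(ℝ). -/

import Mathlib

open Finset

/-- Truncated predecessor in `Fin n` (1-indexed entry `i-1`). -/
def fpred {n : ℕ} (j : Fin n) : Fin n :=
  ⟨j.val - 1, Nat.lt_of_le_of_lt (Nat.sub_le _ _) j.isLt⟩

/-- `ψ(W)_{i,j}` is the tropical weight of the uppermost path from source `i`
to target `j` in the canonical planar network `G_n`. -/
def psi (n : ℕ) (W : Matrix (Fin n) (Fin n) ℝ) : Matrix (Fin n) (Fin n) ℝ :=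
  fun i j => if i ≤ j then ∑ t ∈ Finset.Icc i j, W i t else ∑ t ∈ Finset.Icc j i, W t j

/-- The map `φ`, inverse of `ψ`. -/
def phi (n : ℕ) (A : Matrix (Fin n) (Fin n) ℝ) : Matrix (Fin n) (Fin n) ℝ :=
  fun i j =>
    if i = j then A i j
    else if i < j then A i j - A i (fpred j)
    else A i j - A (fpred i) j

/-- Weak trapeze inequalities. -/
def WeakTrapeze (n : ℕ) (W : Matrix (Fin n) (Fin n) ℝ) : Prop :=
  ∀ i : Fin n, 0 < i.val →
    W i (fpred i) + W (fpred i) (fpred i) + W (fpred i) i ≤ W i i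

/-- Strict trapeze inequalities. -/
def StrictTrapeze (n : ℕ) (W : Matrix (Fin n) (Fin n) ℝ) : Prop :=
  ∀ i : Fin n, 0 < i.val →
    W i (fpred i) + W (fpred i) (fpred i) + W (fpred i) i < W i i

/-- Weak parallelogram inequalities. -/
def WeakPara (n : ℕ) (W : Matrix (Fin n) (Fin n) ℝ) : Prop :=
  ∀ i j : Fin n, ∀ _h : j.val + 2 ≤ i.val,
    W i j ≤ W i ⟨j.val + 1, by have := i.isLt; omega⟩ ∧
    W j i ≤ W ⟨j.val + 1, by have := i.isLt; omega⟩ i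

/-- Strict parallelogram inequalities. -/
def StrictPara (n : ℕ) (W : Matrix (Fin n) (Fin n) ℝ) : Prop :=
  ∀ i j : Fin n, ∀ _h : j.val + 2 ≤ i.val,
    W i j < W i ⟨j.val + 1, by have := i.isLt; omega⟩ ∧
    W j i < W ⟨j.val + 1, by have := i.isLt; omega⟩ i

/-- Maximum, over the permutations of sign `ε`, of the tropical weight of the
permutation in the `k × k` matrix `B` (computed in `WithBot ℝ`, the maximum over
the empty set being `⊥ = -∞`). -/
def tropPermSup (k : ℕ) (ε : ℤˣ) (B : Matrix (Fin k) (Fin k) (WithBot ℝ)) : WithBot ℝ :=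
  (Finset.univ.filter fun σ : Equiv.Perm (Fin k) => Equiv.Perm.sign σ = ε).sup
    fun σ => ∑ i, B i (σ i)

/-- Tropical total nonnegativity of a matrix over `ℝ ∪ {-∞}`. -/
def IsTropTN (n : ℕ) (A : Matrix (Fin n) (Fin n) (WithBot ℝ)) : Prop :=
  ∀ (k : ℕ) (r c : Fin k → Fin n), StrictMono r → StrictMono c →
    tropPermSup k (-1) (A.submatrix r c) ≤ tropPermSup k 1 (A.submatrix r c)

/-- Tropical total positivity of a real matrix. -/
def IsTropTP (n : ℕ) (A : Matrix (Fin n) (Fin n) ℝ) : Prop :=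
  ∀ (k : ℕ), 2 ≤ k → ∀ (r c : Fin k → Fin n), StrictMono r → StrictMono c →
    tropPermSup k (-1) ((A.map ((↑) : ℝ → WithBot ℝ)).submatrix r c) <
      tropPermSup k 1 ((A.map ((↑) : ℝ → WithBot ℝ)).submatrix r c)

/-- Max-plus matrix product. -/
def tropMul {l m p : ℕ} (A : Matrix (Fin l) (Fin m) (WithBot ℝ))
    (B : Matrix (Fin m) (Fin p) (WithBot ℝ)) : Matrix (Fin l) (Fin p) (WithBot ℝ) :=
  fun i j => Finset.univ.sup fun k => A i k + B k j

/-- Tropical identity matrix. -/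
def tropId (n : ℕ) : Matrix (Fin n) (Fin n) (WithBot ℝ) :=
  fun i j => if i = j then 0 else ⊥

/-- Tropical elementary Jacobi matrix `x_i(s)` (0-indexed: `s` in position `(i, i+1)`). -/
def xUp (n : ℕ) (i : ℕ) (s : ℝ) : Matrix (Fin n) (Fin n) (WithBot ℝ) :=
  fun a b => if a = b then 0 else if a.val = i ∧ b.val = i + 1 then (s : WithBot ℝ) else ⊥

/-- Tropical elementary Jacobi matrix `x̄_i(s)` (0-indexed: `s` in position `(i+1, i)`). -/
def xLow (n : ℕ) (i : ℕ) (s : ℝ) : Matrix (Fin n) (Fin n) (WithBot ℝ) :=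
  fun a b => if a = b then 0 else if a.val = i + 1 ∧ b.val = i then (s : WithBot ℝ) else ⊥

/-- Tropical elementary Jacobi matrix `x∘_i(s)` (0-indexed diagonal matrix,
`s` in position `(i, i)`). -/
def xDiag (n : ℕ) (i : ℕ) (s : ℝ) : Matrix (Fin n) (Fin n) (WithBot ℝ) :=
  fun a b => if a = b then (if a.val = i then (s : WithBot ℝ) else 0) else ⊥

/-- Entry of `W` looked up with natural-number (0-based) indices. -/
def wnat (n : ℕ) (W : Matrix (Fin n) (Fin n) ℝ) (a b : ℕ) : ℝ :=
  if h : a < n ∧ b < n then W ⟨a, h.1⟩ ⟨b, h.2⟩ else 0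

/-- The left part `L(W)` of the canonical planar network:
`L(W) = ⊙_{k=1}^{n−1} ⊙_{t=1}^{k} x̄_{n−k+t−1}(W_{n−k+t, t})` (1-indexed). -/
def Lmat (n : ℕ) (W : Matrix (Fin n) (Fin n) ℝ) : Matrix (Fin n) (Fin n) (WithBot ℝ) :=
  ((List.range (n - 1)).flatMap fun k => (List.range (k + 1)).map fun t =>
      xLow n (n - k + t - 2) (wnat n W (n - k + t - 1) t)).foldl tropMul (tropId n)

/-- The diagonal part `D(W) = x∘_1(W_{1,1}) ⊙ ⋯ ⊙ x∘_n(W_{n,n})` (1-indexed). -/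
def Dmat (n : ℕ) (W : Matrix (Fin n) (Fin n) ℝ) : Matrix (Fin n) (Fin n) (WithBot ℝ) :=
  ((List.range n).map fun i => xDiag n i (wnat n W i i)).foldl tropMul (tropId n)

/-- The tropical transfer matrix of the canonical totally connected planar
network `G_n` with weight matrix `W`: `T(W) = L(W) ⊙ D(W) ⊙ (L(Wᵀ))ᵀ`. -/
def Tmat (n : ℕ) (W : Matrix (Fin n) (Fin n) ℝ) : Matrix (Fin n) (Fin n) (WithBot ℝ) :=
  tropMul (tropMul (Lmat n W) (Dmat n W)) (Matrix.transpose (Lmat n W.transpose))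


section AuxTN

open Equiv Finset

lemma wb_ne_bot_of_le {x y : WithBot ℝ} (hx : x ≠ ⊥) (h : x ≤ y) : y ≠ ⊥ := by
  rintro rfl; exact hx (le_bot_iff.mp h)

lemma wb_sum_term_ne_bot {k : ℕ} {f : Fin k → WithBot ℝ}
    (h : (∑ i, f i) ≠ ⊥) (i : Fin k) : f i ≠ ⊥ := by
  intro hi
  apply h
  rw [← Finset.add_sum_erase Finset.univ f (Finset.mem_univ i), hi, WithBot.bot_add]

lemma strictMono_fin_val_le {k : ℕ} {f : Fin k → Fin k} (h : StrictMono f) :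
    ∀ v (hv : v < k), v ≤ (f ⟨v, hv⟩).val := by
  intro v
  induction v with
  | zero => intro hv; exact Nat.zero_le _
  | succ m ih =>
    intro hv
    have hm : m < k := Nat.lt_of_succ_lt hv
    have h1 : f ⟨m, hm⟩ < f ⟨m + 1, hv⟩ := h (by simp [Fin.lt_def])
    have h2 := ih hm
    have h3 := Fin.lt_def.mp h1
    omega

lemma strictMono_perm_eq_one {k : ℕ} (σ : Equiv.Perm (Fin k))
    (h : StrictMono (fun a => σ a : Fin k → Fin k)) : σ = 1 := by
  have hinv : StrictMono (fun a => σ.symm a : Fin k → Fin k) := by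
    intro a b hab
    rw [← h.lt_iff_lt]
    simpa using hab
  apply Equiv.ext
  intro a
  show σ a = a
  have h1 := strictMono_fin_val_le h a.val a.isLt
  have h2 := strictMono_fin_val_le hinv (σ a).val (σ a).isLt
  simp only [Fin.eta] at h1 h2
  rw [Equiv.symm_apply_apply] at h2
  exact Fin.ext (le_antisymm h2 h1)

lemma isTropTN_of_support (n : ℕ) (A : Matrix (Fin n) (Fin n) (WithBot ℝ)) (p : ℕ)
    (hA : ∀ a b : Fin n, A a b ≠ ⊥ → a = b ∨ ((a : ℕ) = p + 1 ∧ (b : ℕ) = p)) :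
    IsTropTN n A := by
  intro k r c hr hc
  have hbot : tropPermSup k (-1) (A.submatrix r c) ≤ ⊥ := by
    apply Finset.sup_le
    intro σ hσ
    rw [Finset.mem_filter] at hσ
    by_contra hne
    have hne' : (∑ i, (A.submatrix r c) i (σ i)) ≠ ⊥ := fun h0 => hne (le_of_eq h0)
    have hterm : ∀ i, A (r i) (c (σ i)) ≠ ⊥ := fun i => wb_sum_term_ne_bot hne' i
    have hcase : ∀ i, r i = c (σ i) ∨ ((r i : ℕ) = p + 1 ∧ (c (σ i) : ℕ) = p) :=
      fun i => hA _ _ (hterm i)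
    have hσ1 : σ = 1 := by
      by_contra hσne
      have hex : ∃ a, σ a ≠ a := by
        by_contra hall
        push_neg at hall
        exact hσne (Equiv.ext hall)
      have hTne : (Finset.univ.filter (fun a => σ a ≠ a)).Nonempty := by
        obtain ⟨a, ha⟩ := hex; exact ⟨a, by simp [ha]⟩
      set T := Finset.univ.filter (fun a => σ a ≠ a) with hT
      set m := T.min' hTne with hm
      have hmT : σ m ≠ m := by have := T.min'_mem hTne; simpa [hT] using this
      have hfix : ∀ b : Fin k, b < m → σ b = b := by
        intro b hb
        by_contra hbne
        exact absurd hb (not_lt.mpr (T.min'_le b (by simp [hT, hbne])))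
      have hσm : m < σ m := by
        rcases lt_or_gt_of_ne (Ne.symm hmT) with h1 | h1
        · exact h1
        · exact absurd (σ.injective (hfix (σ m) h1)) hmT
      set a' := σ.symm m with ha'
      have hσa' : σ a' = m := σ.apply_symm_apply m
      have ha'ne : a' ≠ m := by intro h0; rw [h0] at hσa'; exact hmT hσa'
      have ha'gt : m < a' := by
        rcases lt_or_gt_of_ne ha'ne with h1 | h1
        · exfalso; have := hfix a' h1; rw [this] at hσa'; exact ha'ne hσa'
        · exact h1
      have hcm := Fin.lt_def.mp (hc hσm)
      have hrm := Fin.lt_def.mp (hr ha'gt)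
      have hc2 := hcase a'
      rw [hσa'] at hc2
      rcases hcase m with h1 | h1 <;> rcases hc2 with h2 | h2
      · have e1 : (r m : ℕ) = (c (σ m) : ℕ) := by rw [h1]
        have e2 : (r a' : ℕ) = (c m : ℕ) := by rw [h2]
        omega
      · have e1 : (r m : ℕ) = (c (σ m) : ℕ) := by rw [h1]
        omega
      · have e2 : (r a' : ℕ) = (c m : ℕ) := by rw [h2]
        omega
      · obtain ⟨h1a, _⟩ := h1
        obtain ⟨h2a, _⟩ := h2
        omega
    have hs := hσ.2
    rw [hσ1, Equiv.Perm.sign_one] at hs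
    exact absurd hs (by decide)
  exact le_trans hbot bot_le

lemma sum_transpose_perm {k : ℕ} (B : Matrix (Fin k) (Fin k) (WithBot ℝ))
    (σ : Equiv.Perm (Fin k)) :
    ∑ i, B.transpose i (σ i) = ∑ i, B i (σ⁻¹ i) := by
  rw [← Equiv.sum_comp σ (fun i => B i (σ⁻¹ i))]
  apply Finset.sum_congr rfl
  intro i _
  simp [Matrix.transpose_apply]

lemma tropPermSup_transpose (k : ℕ) (ε : ℤˣ) (B : Matrix (Fin k) (Fin k) (WithBot ℝ)) :
    tropPermSup k ε B.transpose = tropPermSup k ε B := by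
  apply le_antisymm
  · apply Finset.sup_le
    intro σ hσ
    rw [Finset.mem_filter] at hσ
    rw [sum_transpose_perm]
    exact Finset.le_sup (f := fun σ : Equiv.Perm (Fin k) => ∑ i, B i (σ i))
      (Finset.mem_filter.mpr ⟨Finset.mem_univ _, by rw [Equiv.Perm.sign_inv, hσ.2]⟩)
  · apply Finset.sup_le
    intro σ hσ
    rw [Finset.mem_filter] at hσ
    have h1 : ∑ i, B i (σ i) = ∑ i, B.transpose i (σ⁻¹ i) := by
      rw [sum_transpose_perm]
      simp
    rw [h1]
    exact Finset.le_sup (f := fun σ : Equiv.Perm (Fin k) => ∑ i, B.transpose i (σ i))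
      (Finset.mem_filter.mpr ⟨Finset.mem_univ _, by rw [Equiv.Perm.sign_inv, hσ.2]⟩)

lemma isTropTN_transpose {n : ℕ} {A : Matrix (Fin n) (Fin n) (WithBot ℝ)}
    (hA : IsTropTN n A) : IsTropTN n A.transpose := by
  intro k r c hr hc
  have h1 : A.transpose.submatrix r c = (A.submatrix c r).transpose :=
    (Matrix.transpose_submatrix A c r).symm
  rw [h1, tropPermSup_transpose, tropPermSup_transpose]
  exact hA k c r hc hr

lemma tropMul_le_entry {n : ℕ} (A B : Matrix (Fin n) (Fin n) (WithBot ℝ))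
    (i j t : Fin n) : A i t + B t j ≤ tropMul A B i j := by
  show A i t + B t j ≤ Finset.univ.sup fun x => A i x + B x j
  exact Finset.le_sup (f := fun x => A i x + B x j) (Finset.mem_univ t)

lemma le_tropPermSup {k : ℕ} (B : Matrix (Fin k) (Fin k) (WithBot ℝ)) (ε : ℤˣ)
    (σ : Equiv.Perm (Fin k)) (h : Equiv.Perm.sign σ = ε) :
    ∑ i, B i (σ i) ≤ tropPermSup k ε B := by
  rw [tropPermSup]
  exact Finset.le_sup (f := fun σ : Equiv.Perm (Fin k) => ∑ i, B i (σ i))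
    (Finset.mem_filter.mpr ⟨Finset.mem_univ _, h⟩)

lemma tropPermSup_one_attained {k : ℕ} (B : Matrix (Fin k) (Fin k) (WithBot ℝ)) :
    ∃ σ : Equiv.Perm (Fin k), Equiv.Perm.sign σ = 1 ∧
      tropPermSup k 1 B = ∑ i, B i (σ i) := by
  obtain ⟨σ, hmem, heq⟩ := Finset.exists_mem_eq_sup
    (Finset.univ.filter fun σ : Equiv.Perm (Fin k) => Equiv.Perm.sign σ = 1)
    ⟨1, Finset.mem_filter.mpr ⟨Finset.mem_univ _, Equiv.Perm.sign_one⟩⟩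
    (fun σ => ∑ i, B i (σ i))
  exact ⟨σ, (Finset.mem_filter.mp hmem).2, heq⟩

lemma combine_le {n k : ℕ} (A B : Matrix (Fin n) (Fin n) (WithBot ℝ))
    (r c f : Fin k → Fin n) (α β : Equiv.Perm (Fin k)) :
    (∑ i, (A.submatrix r f) i (α i)) + ∑ j, (B.submatrix f c) j (β j) ≤
      ∑ i, (tropMul A B).submatrix r c i (β (α i)) := by
  have h1 : ∑ j, (B.submatrix f c) j (β j) = ∑ i, (B.submatrix f c) (α i) (β (α i)) :=
    (Equiv.sum_comp α (fun j => (B.submatrix f c) j (β j))).symm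
  rw [h1, ← Finset.sum_add_distrib]
  apply Finset.sum_le_sum
  intro i _
  simp only [Matrix.submatrix_apply]
  exact tropMul_le_entry A B (r i) (c (β (α i))) (f (α i))

lemma isTropTN_tropMul {n : ℕ} {A B : Matrix (Fin n) (Fin n) (WithBot ℝ)}
    (hA : IsTropTN n A) (hB : IsTropTN n B) : IsTropTN n (tropMul A B) := by
  intro k r c hr hc
  apply Finset.sup_le
  intro σ hσ
  rw [Finset.mem_filter] at hσ
  have hσs : Equiv.Perm.sign σ = -1 := hσ.2
  have hch : ∀ i : Fin k, ∃ t : Fin n,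
      (tropMul A B).submatrix r c i (σ i) = A (r i) t + B t (c (σ i)) := by
    intro i
    have hn : (Finset.univ : Finset (Fin n)).Nonempty := ⟨r i, Finset.mem_univ _⟩
    obtain ⟨t, _, ht⟩ := Finset.exists_mem_eq_sup Finset.univ hn
      (fun t => A (r i) t + B t (c (σ i)))
    exact ⟨t, ht⟩
  choose f hf using hch
  have hsum : ∑ i, (tropMul A B).submatrix r c i (σ i)
      = (∑ i, A (r i) (f i)) + ∑ i, B (f i) (c (σ i)) := by
    rw [← Finset.sum_add_distrib]
    exact Finset.sum_congr rfl fun i _ => hf i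
  by_cases hinj : Function.Injective f
  · -- injective case
    set s : Finset (Fin n) := Finset.univ.image f with hs
    have hcard : s.card = k := by
      rw [hs, Finset.card_image_of_injective _ hinj, Finset.card_univ, Fintype.card_fin]
    set e := s.orderIsoOfFin hcard with he
    set g : Fin k → Fin n := fun t => (e t : Fin n) with hg
    have hgmono : StrictMono g := fun a b hab => Subtype.coe_lt_coe.mpr (e.strictMono hab)
    have hmem : ∀ i, f i ∈ s := fun i => Finset.mem_image_of_mem f (Finset.mem_univ i)
    set π : Fin k → Fin k := fun i => e.symm ⟨f i, hmem i⟩ with hπ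
    have hπinj : Function.Injective π := by
      intro a b hab
      have h0 : e (π a) = e (π b) := by rw [hab]
      rw [hπ] at h0
      simp only [OrderIso.apply_symm_apply] at h0
      exact hinj (congrArg Subtype.val h0)
    have hπbij : Function.Bijective π := Finite.injective_iff_bijective.mp hπinj
    set πe : Equiv.Perm (Fin k) := Equiv.ofBijective π hπbij with hπe
    have hfg : ∀ i, f i = g (πe i) := by
      intro i
      show f i = (e (π i) : Fin n)
      rw [hπ]
      simp only [OrderIso.apply_symm_apply]
    set β : Equiv.Perm (Fin k) := σ * πe⁻¹ with hβ
    have hβa : ∀ i, β (πe i) = σ i := by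
      intro i
      rw [hβ]
      simp [Equiv.Perm.mul_apply]
    have hAval : ∑ i, A (r i) (f i) = ∑ i, (A.submatrix r g) i (πe i) := by
      apply Finset.sum_congr rfl
      intro i _
      rw [hfg i]
      rfl
    have hBval : ∑ i, B (f i) (c (σ i)) = ∑ j, (B.submatrix g c) j (β j) := by
      rw [← Equiv.sum_comp πe (fun j => (B.submatrix g c) j (β j))]
      apply Finset.sum_congr rfl
      intro i _
      rw [hfg i, ← hβa i]
      rfl
    rw [hsum, hAval, hBval]
    rcases Int.units_eq_one_or (Equiv.Perm.sign πe) with hπs | hπs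
    · -- πe even, β odd : use TN of B
      have hβs : Equiv.Perm.sign β = -1 := by
        rw [hβ, Equiv.Perm.sign_mul, hσs, Equiv.Perm.sign_inv, hπs]
        decide
      obtain ⟨β', hβ's, hβ'eq⟩ := tropPermSup_one_attained (B.submatrix g c)
      have step1 : ∑ j, (B.submatrix g c) j (β j) ≤ ∑ j, (B.submatrix g c) j (β' j) := by
        calc ∑ j, (B.submatrix g c) j (β j)
            ≤ tropPermSup k (-1) (B.submatrix g c) := le_tropPermSup _ _ β hβs
          _ ≤ tropPermSup k 1 (B.submatrix g c) := hB k g c hgmono hc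
          _ = ∑ j, (B.submatrix g c) j (β' j) := hβ'eq
      calc (∑ i, (A.submatrix r g) i (πe i)) + ∑ j, (B.submatrix g c) j (β j)
          ≤ (∑ i, (A.submatrix r g) i (πe i)) + ∑ j, (B.submatrix g c) j (β' j) :=
            add_le_add_right step1 _
        _ ≤ ∑ i, (tropMul A B).submatrix r c i (β' (πe i)) := combine_le A B r c g πe β'
        _ = ∑ i, (tropMul A B).submatrix r c i ((β' * πe) i) := rfl
        _ ≤ tropPermSup k 1 ((tropMul A B).submatrix r c) := by
            apply le_tropPermSup
            rw [Equiv.Perm.sign_mul, hβ's, hπs]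
            decide
    · -- πe odd : use TN of A
      have hβs : Equiv.Perm.sign β = 1 := by
        rw [hβ, Equiv.Perm.sign_mul, hσs, Equiv.Perm.sign_inv, hπs]
        decide
      obtain ⟨α', hα's, hα'eq⟩ := tropPermSup_one_attained (A.submatrix r g)
      have step1 : ∑ i, (A.submatrix r g) i (πe i) ≤ ∑ i, (A.submatrix r g) i (α' i) := by
        calc ∑ i, (A.submatrix r g) i (πe i)
            ≤ tropPermSup k (-1) (A.submatrix r g) := le_tropPermSup _ _ πe hπs
          _ ≤ tropPermSup k 1 (A.submatrix r g) := hA k r g hr hgmono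
          _ = ∑ i, (A.submatrix r g) i (α' i) := hα'eq
      calc (∑ i, (A.submatrix r g) i (πe i)) + ∑ j, (B.submatrix g c) j (β j)
          ≤ (∑ i, (A.submatrix r g) i (α' i)) + ∑ j, (B.submatrix g c) j (β j) :=
            add_le_add_left step1 _
        _ ≤ ∑ i, (tropMul A B).submatrix r c i (β (α' i)) := combine_le A B r c g α' β
        _ = ∑ i, (tropMul A B).submatrix r c i ((β * α') i) := rfl
        _ ≤ tropPermSup k 1 ((tropMul A B).submatrix r c) := by
            apply le_tropPermSup
            rw [Equiv.Perm.sign_mul, hβs, hα's]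
            decide
  · -- non-injective case : swap trick
    have hex : ∃ i1 i2, i1 ≠ i2 ∧ f i1 = f i2 := by
      rw [Function.Injective] at hinj
      push_neg at hinj
      obtain ⟨a, b, h1, h2⟩ := hinj
      exact ⟨a, b, h2, h1⟩
    obtain ⟨i1, i2, hne12, hfe⟩ := hex
    set τ := σ * Equiv.swap i1 i2 with hτ
    have hτs : Equiv.Perm.sign τ = 1 := by
      rw [hτ, Equiv.Perm.sign_mul, hσs, Equiv.Perm.sign_swap hne12]
      decide
    have hfswap : ∀ x, f (Equiv.swap i1 i2 x) = f x := by
      intro x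
      rcases eq_or_ne x i1 with rfl | h1
      · rw [Equiv.swap_apply_left]; exact hfe.symm
      rcases eq_or_ne x i2 with rfl | h2
      · rw [Equiv.swap_apply_right]; exact hfe
      · rw [Equiv.swap_apply_of_ne_of_ne h1 h2]
    have hBsum : ∑ i, B (f i) (c (τ i)) = ∑ i, B (f i) (c (σ i)) := by
      apply Fintype.sum_equiv (Equiv.swap i1 i2)
      intro x
      rw [hfswap x]
      rfl
    calc ∑ i, (tropMul A B).submatrix r c i (σ i)
        = (∑ i, A (r i) (f i)) + ∑ i, B (f i) (c (σ i)) := hsum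
      _ = (∑ i, A (r i) (f i)) + ∑ i, B (f i) (c (τ i)) := by rw [hBsum]
      _ = ∑ i, (A (r i) (f i) + B (f i) (c (τ i))) := Finset.sum_add_distrib.symm
      _ ≤ ∑ i, (tropMul A B).submatrix r c i (τ i) := by
          apply Finset.sum_le_sum
          intro i _
          simp only [Matrix.submatrix_apply]
          exact tropMul_le_entry A B (r i) (c (τ i)) (f i)
      _ ≤ tropPermSup k 1 ((tropMul A B).submatrix r c) := le_tropPermSup _ _ τ hτs

lemma foldl_TN {n : ℕ} (l : List (Matrix (Fin n) (Fin n) (WithBot ℝ)))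
    (hl : ∀ M ∈ l, IsTropTN n M) :
    ∀ P, IsTropTN n P → IsTropTN n (l.foldl tropMul P) := by
  induction l with
  | nil => intro P hP; exact hP
  | cons M l ih =>
    intro P hP
    exact ih (fun N hN => hl N (List.mem_cons_of_mem _ hN)) _
      (isTropTN_tropMul hP (hl M List.mem_cons_self))

lemma isTropTN_xLow (n q : ℕ) (s : ℝ) : IsTropTN n (xLow n q s) := by
  apply isTropTN_of_support n _ q
  intro a b h
  rw [xLow] at h
  split_ifs at h with h1 h2
  · exact Or.inl h1
  · exact Or.inr h2
  · exact absurd rfl h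

lemma isTropTN_xDiag (n q : ℕ) (s : ℝ) : IsTropTN n (xDiag n q s) := by
  apply isTropTN_of_support n _ n
  intro a b h
  rw [xDiag] at h
  split_ifs at h with h1 h2
  · exact Or.inl h1
  · exact Or.inl h1
  · exact absurd rfl h

lemma isTropTN_tropId (n : ℕ) : IsTropTN n (tropId n) := by
  apply isTropTN_of_support n _ n
  intro a b h
  rw [tropId] at h
  split_ifs at h with h1
  · exact Or.inl h1
  · exact absurd rfl h

lemma isTropTN_Lmat (n : ℕ) (W : Matrix (Fin n) (Fin n) ℝ) : IsTropTN n (Lmat n W) := by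
  apply foldl_TN
  · intro M hM
    simp only [List.mem_flatMap, List.mem_map, List.mem_range] at hM
    obtain ⟨k, _, t, _, rfl⟩ := hM
    exact isTropTN_xLow _ _ _
  · exact isTropTN_tropId n

lemma isTropTN_Dmat (n : ℕ) (W : Matrix (Fin n) (Fin n) ℝ) : IsTropTN n (Dmat n W) := by
  apply foldl_TN
  · intro M hM
    simp only [List.mem_map, List.mem_range] at hM
    obtain ⟨t, _, rfl⟩ := hM
    exact isTropTN_xDiag _ _ _
  · exact isTropTN_tropId n

lemma tropMul_ne_bot_diag {n : ℕ} (P M : Matrix (Fin n) (Fin n) (WithBot ℝ))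
    (hM : ∀ a, M a a ≠ ⊥) {i j : Fin n} (h : P i j ≠ ⊥) : tropMul P M i j ≠ ⊥ :=
  wb_ne_bot_of_le (WithBot.add_ne_bot.mpr ⟨h, hM j⟩) (tropMul_le_entry P M i j j)

lemma foldl_ne_bot {n : ℕ} (l : List (Matrix (Fin n) (Fin n) (WithBot ℝ)))
    (hl : ∀ M ∈ l, ∀ a, M a a ≠ ⊥) :
    ∀ (P : Matrix (Fin n) (Fin n) (WithBot ℝ)) (i j : Fin n), P i j ≠ ⊥ →
      (l.foldl tropMul P) i j ≠ ⊥ := by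
  induction l with
  | nil => intro P i j h; exact h
  | cons M l ih =>
    intro P i j h
    exact ih (fun N hN => hl N (List.mem_cons_of_mem _ hN)) _ i j
      (tropMul_ne_bot_diag P M (hl M List.mem_cons_self) h)

lemma xLow_diag_ne_bot (n q : ℕ) (s : ℝ) (a : Fin n) : xLow n q s a a ≠ ⊥ := by
  simp [xLow]

lemma xDiag_diag_ne_bot (n q : ℕ) (s : ℝ) (a : Fin n) : xDiag n q s a a ≠ ⊥ := by
  rw [xDiag]
  rw [if_pos rfl]
  split_ifs
  · exact WithBot.coe_ne_bot
  · simp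

lemma tropMul_xLow_drop {n : ℕ} (P : Matrix (Fin n) (Fin n) (WithBot ℝ)) (q : ℕ) (s : ℝ)
    (hq : q + 1 < n) {i j : Fin n} (hj : (j : ℕ) = q)
    (hP : P i ⟨q + 1, hq⟩ ≠ ⊥) : tropMul P (xLow n q s) i j ≠ ⊥ := by
  have hne : (⟨q + 1, hq⟩ : Fin n) ≠ j := by
    intro h0
    rw [← h0] at hj
    simp at hj
  have hx : xLow n q s ⟨q + 1, hq⟩ j = (s : WithBot ℝ) := by
    rw [xLow, if_neg hne, if_pos ⟨rfl, hj⟩]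
  apply wb_ne_bot_of_le _ (tropMul_le_entry P (xLow n q s) i j ⟨q + 1, hq⟩)
  rw [hx]
  exact WithBot.add_ne_bot.mpr ⟨hP, WithBot.coe_ne_bot⟩

lemma PL_ne_bot (n : ℕ) (W : Matrix (Fin n) (Fin n) ℝ) :
    ∀ K, ∀ i j : Fin n, j ≤ i → (i = j ∨ n - 1 ≤ (j : ℕ) + K) →
      (((List.range K).flatMap fun k => (List.range (k + 1)).map fun t =>
        xLow n (n - k + t - 2) (wnat n W (n - k + t - 1) t)).foldl tropMul (tropId n)) i j ≠ ⊥ := by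
  intro K
  induction K with
  | zero =>
    intro i j hji hcond
    have hij : i = j := by
      rcases hcond with h | h
      · exact h
      · have h1 := j.isLt
        have h2 := i.isLt
        have h3 := Fin.le_def.mp hji
        exact Fin.ext (by omega)
    subst hij
    simp [tropId]
  | succ K ih =>
    intro i j hji hcond
    rw [List.range_succ, List.flatMap_append, List.foldl_append]
    have hflat : ([K] : List ℕ).flatMap (fun k => (List.range (k + 1)).map fun t =>
        xLow n (n - k + t - 2) (wnat n W (n - k + t - 1) t))
        = (List.range (K + 1)).map fun t =>
          xLow n (n - K + t - 2) (wnat n W (n - K + t - 1) t) := by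
      simp
    rw [hflat]
    have hmembers : ∀ M ∈ ((List.range (K + 1)).map fun t =>
        xLow n (n - K + t - 2) (wnat n W (n - K + t - 1) t)), ∀ a : Fin n, M a a ≠ ⊥ := by
      intro M hM
      simp only [List.mem_map, List.mem_range] at hM
      obtain ⟨t, _, rfl⟩ := hM
      exact xLow_diag_ne_bot _ _ _
    by_cases hc1 : i = j ∨ n - 1 ≤ (j : ℕ) + K
    · exact foldl_ne_bot _ hmembers _ i j (ih i j hji hc1)
    · push_neg at hc1
      obtain ⟨hij, hlt⟩ := hc1
      have hjv : (j : ℕ) + K + 2 = n := by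
        rcases hcond with h | h
        · exact absurd h hij
        · have := j.isLt
          omega
      have hjlt : (j : ℕ) < (i : ℕ) := by
        have h3 := Fin.le_def.mp hji
        rcases Nat.lt_or_ge (j : ℕ) (i : ℕ) with h | h
        · exact h
        · exact absurd (Fin.ext (by omega : (i : ℕ) = (j : ℕ))) hij
      have hq1 : (j : ℕ) + 1 < n := by omega
      rw [List.range_succ_eq_map, List.map_cons, List.foldl_cons]
      apply foldl_ne_bot
      · intro M hM a
        apply hmembers M _ a
        rw [List.range_succ_eq_map, List.map_cons]
        exact List.mem_cons_of_mem _ hM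
      · have hidx : n - K + 0 - 2 = (j : ℕ) := by omega
        rw [hidx]
        apply tropMul_xLow_drop _ _ _ hq1 rfl
        apply ih i ⟨(j : ℕ) + 1, hq1⟩
        · exact Fin.le_def.mpr (by simp; omega)
        · right
          simp
          omega

lemma Lmat_ne_bot (n : ℕ) (W : Matrix (Fin n) (Fin n) ℝ) (i j : Fin n) (h : j ≤ i) :
    Lmat n W i j ≠ ⊥ := by
  have := PL_ne_bot n W (n - 1) i j h (Or.inr (by omega))
  exact this

lemma Dmat_diag_ne_bot (n : ℕ) (W : Matrix (Fin n) (Fin n) ℝ) (m : Fin n) :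
    Dmat n W m m ≠ ⊥ := by
  apply foldl_ne_bot
  · intro M hM a
    simp only [List.mem_map, List.mem_range] at hM
    obtain ⟨t, _, rfl⟩ := hM
    exact xDiag_diag_ne_bot _ _ _ _
  · simp [tropId]

end AuxTN

/-- the tropical transfer matrix of the canonical totally
connected planar network has real entries and is tropical totally nonnegative. -/
theorem transfer_matrix_TN (n : ℕ) (W : Matrix (Fin n) (Fin n) ℝ) :
    (∀ i j : Fin n, ∃ r : ℝ, Tmat n W i j = (r : WithBot ℝ)) ∧
      IsTropTN n (Tmat n W) := by
  constructor
  · intro i j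
    have hne : Tmat n W i j ≠ ⊥ := by
      set m := min i j with hm
      have hmi : m ≤ i := min_le_left i j
      have hmj : m ≤ j := min_le_right i j
      have h1 : Lmat n W i m ≠ ⊥ := Lmat_ne_bot n W i m hmi
      have h2 : Dmat n W m m ≠ ⊥ := Dmat_diag_ne_bot n W m
      have h3 : Lmat n W.transpose j m ≠ ⊥ := Lmat_ne_bot n W.transpose j m hmj
      have h4 : tropMul (Lmat n W) (Dmat n W) i m ≠ ⊥ :=
        wb_ne_bot_of_le (WithBot.add_ne_bot.mpr ⟨h1, h2⟩)
          (tropMul_le_entry (Lmat n W) (Dmat n W) i m m)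
      have h5 : (Lmat n W.transpose).transpose m j ≠ ⊥ := by
        rw [Matrix.transpose_apply]
        exact h3
      exact wb_ne_bot_of_le (WithBot.add_ne_bot.mpr ⟨h4, h5⟩)
        (tropMul_le_entry (tropMul (Lmat n W) (Dmat n W))
          (Lmat n W.transpose).transpose i j m)
    obtain ⟨r, hr⟩ := WithBot.ne_bot_iff_exists.mp hne
    exact ⟨r, hr.symm⟩
  · exact isTropTN_tropMul
      (isTropTN_tropMul (isTropTN_Lmat n W) (isTropTN_Dmat n W))
      (isTropTN_transpose (isTropTN_Lmat n W.transpose))
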